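/- Consider the map g: ℝ³ → ℝ³ given by g(w,u,v) = (A·w^{a₁} + |w|^{b}·u, C·u·|w|^{b}, C·v·|w|^{b}), where A, C are real constants, a₁ > 1, and b > 0 (here w^{a₁} denotes sign(w)|w|^{a₁}). Then the fixed point (0,0,0) of g is asymptotically stable: for every δ > 0 there is ε > 0 such that every point x with |x| < ε satisfies |gᵏ(x)| < δ for all k ≥ 0 and gᵏ(x) → 0 as k → ∞. -/

import Mathlib

open Filter

theorem stmt5 (A C a₁ b : ℝ) (ha₁ : 1 < a₁) (hb : 0 < b)
    (g : ℝ × ℝ × ℝ → ℝ × ℝ × ℝ)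
    (hg : ∀ w u v : ℝ, g (w, u, v) =
      (A * Real.sign w * |w| ^ a₁ + |w| ^ b * u, C * u * |w| ^ b, C * v * |w| ^ b)) :
    ∀ δ > 0, ∃ ε > 0, ∀ x : ℝ × ℝ × ℝ, ‖x‖ < ε →
      (∀ k : ℕ, ‖g^[k] x‖ < δ) ∧
      Tendsto (fun k : ℕ => g^[k] x) atTop (nhds 0) := by
  set K : ℝ := |A| + |C| + 1 with hKdef
  have hK : 0 < K := by positivity
  have hAK : |A| ≤ K := by nlinarith [abs_nonneg C]
  have hCK : |C| ≤ K := by nlinarith [abs_nonneg A]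
  have h1K : (1 : ℝ) ≤ K := by nlinarith [abs_nonneg A, abs_nonneg C]
  have ha : 0 < a₁ - 1 := by linarith
  set ε₀ : ℝ := min (((4 * K)⁻¹) ^ (1 / (a₁ - 1)))
      (((4 * K)⁻¹) ^ (1 / b)) with hε₀def
  have h4K : 0 < (4 * K)⁻¹ := by positivity
  have hε₀pos : 0 < ε₀ := lt_min (Real.rpow_pos_of_pos h4K _) (Real.rpow_pos_of_pos h4K _)
  have hεa : ε₀ ^ (a₁ - 1) ≤ (4 * K)⁻¹ := by
    have h1 : ε₀ ≤ ((4 * K)⁻¹) ^ (1 / (a₁ - 1)) := min_le_left _ _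
    have h2 : (((4 * K)⁻¹) ^ (1 / (a₁ - 1))) ^ (a₁ - 1) = (4 * K)⁻¹ := by
      rw [← Real.rpow_mul h4K.le, one_div, inv_mul_cancel₀ ha.ne', Real.rpow_one]
    calc ε₀ ^ (a₁ - 1) ≤ (((4 * K)⁻¹) ^ (1 / (a₁ - 1))) ^ (a₁ - 1) :=
          Real.rpow_le_rpow hε₀pos.le h1 ha.le
      _ = (4 * K)⁻¹ := h2
  have hεb : ε₀ ^ b ≤ (4 * K)⁻¹ := by
    have h1 : ε₀ ≤ ((4 * K)⁻¹) ^ (1 / b) := min_le_right _ _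
    have h2 : (((4 * K)⁻¹) ^ (1 / b)) ^ b = (4 * K)⁻¹ := by
      rw [← Real.rpow_mul h4K.le, one_div, inv_mul_cancel₀ hb.ne', Real.rpow_one]
    calc ε₀ ^ b ≤ (((4 * K)⁻¹) ^ (1 / b)) ^ b := Real.rpow_le_rpow hε₀pos.le h1 hb.le
      _ = (4 * K)⁻¹ := h2
  have hKK : K * (4 * K)⁻¹ = 1 / 4 := by field_simp
  have hA4 : |A| * ε₀ ^ (a₁ - 1) ≤ 1 / 4 := by
    calc |A| * ε₀ ^ (a₁ - 1) ≤ K * (4 * K)⁻¹ := by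
          apply mul_le_mul hAK hεa (by positivity) hK.le
      _ = 1 / 4 := hKK
  have hεb4 : ε₀ ^ b ≤ 1 / 4 := by
    calc ε₀ ^ b ≤ (4 * K)⁻¹ := hεb
      _ ≤ K * (4 * K)⁻¹ := by nlinarith
      _ = 1 / 4 := hKK
  have hC4 : |C| * ε₀ ^ b ≤ 1 / 4 := by
    calc |C| * ε₀ ^ b ≤ K * (4 * K)⁻¹ := by
          apply mul_le_mul hCK hεb (by positivity) hK.le
      _ = 1 / 4 := hKK
  -- the contraction property
  have contract : ∀ x : ℝ × ℝ × ℝ, ‖x‖ ≤ ε₀ → ‖g x‖ ≤ ‖x‖ / 2 := by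
    rintro ⟨w, u, v⟩ hx
    set r : ℝ := ‖((w, u, v) : ℝ × ℝ × ℝ)‖ with hr
    have hrnn : 0 ≤ r := norm_nonneg _
    have hw : |w| ≤ r := by
      exact norm_fst_le ((w, u, v) : ℝ × ℝ × ℝ)
    have hu : |u| ≤ r := by
      have := (norm_fst_le ((u, v) : ℝ × ℝ)).trans (norm_snd_le ((w, u, v) : ℝ × ℝ × ℝ))
      exact this
    have hv : |v| ≤ r := by
      have := (norm_snd_le ((u, v) : ℝ × ℝ)).trans (norm_snd_le ((w, u, v) : ℝ × ℝ × ℝ))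
      exact this
    have hwε : |w| ≤ ε₀ := hw.trans hx
    have hwb : |w| ^ b ≤ ε₀ ^ b := Real.rpow_le_rpow (abs_nonneg w) hwε hb.le
    have hwa : |w| ^ a₁ ≤ ε₀ ^ (a₁ - 1) * r := by
      have e : |w| ^ a₁ = |w| ^ (a₁ - 1) * |w| := by
        have h := Real.rpow_add' (abs_nonneg w) (y := a₁ - 1) (z := 1) (by linarith)
        rw [sub_add_cancel, Real.rpow_one] at h
        exact h
      rw [e]
      exact mul_le_mul (Real.rpow_le_rpow (abs_nonneg w) hwε ha.le) hw (abs_nonneg w)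
        (by positivity)
    rw [hg]
    rw [Prod.norm_def, Prod.norm_def]
    dsimp only
    have hsgn : |Real.sign w| ≤ 1 := by
      rcases Real.sign_apply_eq w with h | h | h <;> simp [h]
    refine max_le ?_ (max_le ?_ ?_)
    · -- first component
      have e1 : |(A * Real.sign w * |w| ^ a₁)| ≤ |A| * |w| ^ a₁ := by
        rw [abs_mul, abs_mul]
        have : 0 ≤ |w| ^ a₁ := by positivity
        calc |A| * |Real.sign w| * |(|w| ^ a₁)| ≤ |A| * 1 * |(|w| ^ a₁)| := by
              apply mul_le_mul_of_nonneg_right (by nlinarith [abs_nonneg A]) (abs_nonneg _)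
          _ = |A| * |w| ^ a₁ := by rw [abs_of_nonneg this]; ring
      have e2 : |(|w| ^ b * u)| ≤ ε₀ ^ b * r := by
        rw [abs_mul, abs_of_nonneg (by positivity : (0:ℝ) ≤ |w| ^ b)]
        exact mul_le_mul hwb hu (abs_nonneg u) (by positivity)
      calc ‖A * Real.sign w * |w| ^ a₁ + |w| ^ b * u‖
          ≤ |(A * Real.sign w * |w| ^ a₁)| + |(|w| ^ b * u)| := by
            rw [Real.norm_eq_abs]; exact abs_add_le _ _
        _ ≤ |A| * (ε₀ ^ (a₁ - 1) * r) + ε₀ ^ b * r := by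
            refine add_le_add (e1.trans ?_) e2
            exact mul_le_mul_of_nonneg_left hwa (abs_nonneg A)
        _ = (|A| * ε₀ ^ (a₁ - 1)) * r + ε₀ ^ b * r := by ring
        _ ≤ (1 / 4) * r + (1 / 4) * r := by
            refine add_le_add ?_ ?_ <;> exact mul_le_mul_of_nonneg_right (by assumption) hrnn
        _ = r / 2 := by ring
    · -- second component
      calc ‖C * u * |w| ^ b‖ = |C| * |u| * |w| ^ b := by
            rw [Real.norm_eq_abs, abs_mul, abs_mul,
              abs_of_nonneg (by positivity : (0:ℝ) ≤ |w| ^ b)]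
        _ ≤ |C| * r * ε₀ ^ b := by
            apply mul_le_mul (mul_le_mul_of_nonneg_left hu (abs_nonneg C)) hwb
              (by positivity) (by positivity)
        _ = (|C| * ε₀ ^ b) * r := by ring
        _ ≤ (1 / 4) * r := mul_le_mul_of_nonneg_right hC4 hrnn
        _ ≤ r / 2 := by linarith
    · -- third component
      calc ‖C * v * |w| ^ b‖ = |C| * |v| * |w| ^ b := by
            rw [Real.norm_eq_abs, abs_mul, abs_mul,
              abs_of_nonneg (by positivity : (0:ℝ) ≤ |w| ^ b)]
        _ ≤ |C| * r * ε₀ ^ b := by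
            apply mul_le_mul (mul_le_mul_of_nonneg_left hv (abs_nonneg C)) hwb
              (by positivity) (by positivity)
        _ = (|C| * ε₀ ^ b) * r := by ring
        _ ≤ (1 / 4) * r := mul_le_mul_of_nonneg_right hC4 hrnn
        _ ≤ r / 2 := by linarith
  -- main argument
  intro δ hδ
  refine ⟨min ε₀ δ, lt_min hε₀pos hδ, fun x hx => ?_⟩
  have hx0 : ‖x‖ < ε₀ := hx.trans_le (min_le_left _ _)
  have hxδ : ‖x‖ < δ := hx.trans_le (min_le_right _ _)
  have key : ∀ k : ℕ, ‖g^[k] x‖ ≤ (1 / 2) ^ k * ‖x‖ := by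
    intro k
    induction k with
    | zero => simp
    | succ k ih =>
      have hle1 : (1 / 2 : ℝ) ^ k ≤ 1 := pow_le_one₀ (by norm_num) (by norm_num)
      have h1 : ‖g^[k] x‖ ≤ ε₀ := by
        calc ‖g^[k] x‖ ≤ (1 / 2) ^ k * ‖x‖ := ih
          _ ≤ 1 * ‖x‖ := mul_le_mul_of_nonneg_right hle1 (norm_nonneg x)
          _ = ‖x‖ := one_mul _
          _ ≤ ε₀ := hx0.le
      rw [Function.iterate_succ_apply']
      calc ‖g (g^[k] x)‖ ≤ ‖g^[k] x‖ / 2 := contract _ h1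
        _ ≤ ((1 / 2) ^ k * ‖x‖) / 2 := by linarith
        _ = (1 / 2) ^ (k + 1) * ‖x‖ := by ring
  constructor
  · intro k
    have hle1 : (1 / 2 : ℝ) ^ k ≤ 1 := pow_le_one₀ (by norm_num) (by norm_num)
    calc ‖g^[k] x‖ ≤ (1 / 2) ^ k * ‖x‖ := key k
      _ ≤ 1 * ‖x‖ := mul_le_mul_of_nonneg_right hle1 (norm_nonneg x)
      _ = ‖x‖ := one_mul _
      _ < δ := hxδ
  · apply squeeze_zero_norm key
    have := (tendsto_pow_atTop_nhds_zero_of_lt_one (by norm_num : (0:ℝ) ≤ 1 / 2)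
      (by norm_num : (1 / 2 : ℝ) < 1)).mul_const ‖x‖
    simpa using this
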